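/- arXiv:1104.0167 — 3 statements merged into one kernel-verified Lean document; each statement's English description precedes it below -/
import Mathlib

section
/- Let σ : [0,∞) → [0,∞) be continuous, regularly varying at 0 with index λ ∈ (0,1) and regularly varying at infinity with index α ∈ (0,1). Then for any ε > 0 there exist constants C, a > 0 such that for all 0 < x ≤ a and all t > 0, σ(tx)/σ(x) ≤ C·t^ℓ if t ≤ 1 and σ(tx)/σ(x) ≤ C·t^u if t > 1, where ℓ = min(λ−ε, α+ε) and u = max(α+ε, λ+ε). -/
open Filter Set Real



lemma unif_bound (σ : ℝ → ℝ) (β : ℝ) (l : Filter ℝ) [l.NeBot] [l.IsCountablyGenerated]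
    (hl : ∀ᶠ x in l, 0 < x)
    (hmul : ∀ c : ℝ, 0 < c → Tendsto (fun x => c * x) l l)
    (hcont : ContinuousOn σ (Set.Ici 0)) (hpos : ∀ x > (0:ℝ), 0 < σ x)
    (h : ∀ t > (0:ℝ), Tendsto (fun x => σ (t * x) / σ x) l (nhds (t ^ β))) :
    ∃ ρ > (1:ℝ), ∀ᶠ x in l, 0 < x ∧ ∀ t, 1 ≤ t → t ≤ ρ →
      σ (t * x) ≤ 4 * t ^ β * σ x ∧ t ^ β * σ x ≤ 4 * σ (t * x) := by
  obtain ⟨A, hA⟩ := l.exists_antitone_basis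
  have he1 : (1:ℝ) < Real.exp 1 := by have := Real.add_one_le_exp 1; linarith
  -- the Baire sets
  set F : ℕ → Set ℝ := fun n =>
    Icc 1 (Real.exp 1) ∩ ⋂ x ∈ A n ∩ Ioi (0:ℝ),
      (Icc 1 (Real.exp 1) ∩ {t : ℝ | t ^ β * σ x ≤ 2 * σ (t * x) ∧ σ (t * x) ≤ 2 * (t ^ β * σ x)})
      with hF
  have hFclosed : ∀ n, IsClosed (F n) := by
    intro n
    apply isClosed_Icc.inter
    apply isClosed_biInter
    intro x hx
    have hx0 : 0 < x := hx.2
    have hgc : ContinuousOn (fun t : ℝ => σ (t * x)) (Icc 1 (Real.exp 1)) := by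
      apply hcont.comp (continuous_mul_right x).continuousOn
      intro t ht
      exact mem_Ici.mpr (mul_nonneg (by linarith [ht.1]) hx0.le)
    have hpc : ContinuousOn (fun t : ℝ => t ^ β) (Icc 1 (Real.exp 1)) := by
      intro t ht
      exact (Real.continuousAt_rpow_const t β (Or.inl (by linarith [ht.1]))).continuousWithinAt
    have h1 : IsClosed (Icc 1 (Real.exp 1) ∩ {t : ℝ | t ^ β * σ x - 2 * σ (t * x) ≤ 0}) := by
      have : ContinuousOn (fun t : ℝ => t ^ β * σ x - 2 * σ (t * x)) (Icc 1 (Real.exp 1)) :=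
        (hpc.mul continuousOn_const).sub (continuousOn_const.mul hgc)
      exact this.preimage_isClosed_of_isClosed isClosed_Icc isClosed_Iic
    have h2 : IsClosed (Icc 1 (Real.exp 1) ∩ {t : ℝ | σ (t * x) - 2 * (t ^ β * σ x) ≤ 0}) := by
      have : ContinuousOn (fun t : ℝ => σ (t * x) - 2 * (t ^ β * σ x)) (Icc 1 (Real.exp 1)) :=
        hgc.sub (continuousOn_const.mul (hpc.mul continuousOn_const))
      exact this.preimage_isClosed_of_isClosed isClosed_Icc isClosed_Iic
    have : Icc 1 (Real.exp 1) ∩ {t : ℝ | t ^ β * σ x ≤ 2 * σ (t * x) ∧ σ (t * x) ≤ 2 * (t ^ β * σ x)}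
        = (Icc 1 (Real.exp 1) ∩ {t : ℝ | t ^ β * σ x - 2 * σ (t * x) ≤ 0}) ∩
          (Icc 1 (Real.exp 1) ∩ {t : ℝ | σ (t * x) - 2 * (t ^ β * σ x) ≤ 0}) := by
      ext t; constructor
      · rintro ⟨ht, h1, h2⟩; exact ⟨⟨ht, by simpa using by linarith⟩, ⟨ht, by simpa using by linarith⟩⟩
      · rintro ⟨⟨ht, h1⟩, ⟨_, h2⟩⟩
        simp only [mem_setOf_eq] at h1 h2
        exact ⟨ht, by linarith, by linarith⟩
    rw [this]
    exact h1.inter h2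
  -- coverage
  have hcover : ∀ t ∈ Icc (1:ℝ) (Real.exp 1), ∃ n, t ∈ F n := by
    intro t ht
    have ht0 : (0:ℝ) < t := by linarith [ht.1]
    have htb : 0 < t ^ β := Real.rpow_pos_of_pos ht0 β
    have hev : ∀ᶠ x in l, σ (t * x) / σ x ∈ Ioo (t ^ β / 2) (2 * t ^ β) :=
      (h t ht0).eventually (Ioo_mem_nhds (by linarith) (by linarith))
    obtain ⟨n, -, hn⟩ := (hA.1.eventually_iff).mp hev
    refine ⟨n, ht, ?_⟩
    simp only [mem_iInter]
    rintro x ⟨hxA, hx0⟩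
    have hσx : 0 < σ x := hpos x hx0
    have := hn hxA
    refine ⟨ht, ?_, ?_⟩
    · have := this.1
      rw [div_lt_div_iff₀ (by norm_num) hσx] at this
      linarith
    · have := this.2
      rw [div_lt_iff₀ hσx] at this
      linarith
  -- Baire
  set G : ℕ → Set ℝ := fun n => F n ∪ Iic 1 ∪ Ici (Real.exp 1) with hG
  have hGclosed : ∀ n, IsClosed (G n) := fun n =>
    ((hFclosed n).union isClosed_Iic).union isClosed_Ici
  have hGcover : (⋃ n, G n) = univ := by
    ext t
    simp only [mem_iUnion, mem_univ, iff_true]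
    rcases le_or_gt t 1 with h1 | h1
    · exact ⟨0, Or.inl (Or.inr h1)⟩
    rcases le_or_gt (Real.exp 1) t with h2 | h2
    · exact ⟨0, Or.inr h2⟩
    obtain ⟨n, hn⟩ := hcover t ⟨h1.le, h2.le⟩
    exact ⟨n, Or.inl (Or.inl hn)⟩
  have hdense := dense_iUnion_interior_of_closed hGclosed hGcover
  obtain ⟨p, hpmem, hpo⟩ := hdense.exists_mem_open isOpen_Ioo
    (nonempty_Ioo.mpr he1)
  obtain ⟨N, hpN⟩ := mem_iUnion.mp hpmem
  have hopen : IsOpen (interior (G N) ∩ Ioo 1 (Real.exp 1)) := isOpen_interior.inter isOpen_Ioo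
  obtain ⟨δ, hδ0, hball⟩ := Metric.isOpen_iff.mp hopen p ⟨hpN, hpo⟩
  rw [Real.ball_eq_Ioo] at hball
  set c := p - δ/2 with hc
  set d := p + δ/2 with hd
  have hcd : Icc c d ⊆ F N := by
    intro t ht
    have htm : t ∈ interior (G N) ∩ Ioo 1 (Real.exp 1) := by
      apply hball
      have h1 := ht.1; have h2 := ht.2
      simp only [hc] at h1; simp only [hd] at h2
      exact ⟨by linarith, by linarith⟩
    have h1 := interior_subset htm.1
    have h2 := htm.2
    rcases h1 with (h1 | h1) | h1
    · exact h1
    · exact absurd h2.1 (mem_Iic.mp h1).not_gt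
    · exact absurd h2.2 (mem_Ici.mp h1).not_gt
  have hc1 : 1 < c := by
    have hcmem : c ∈ Ioo (p - δ) (p + δ) := by
      constructor <;> simp only [hc] <;> linarith
    exact (hball hcmem).2.1
  have hc0 : (0:ℝ) < c := by linarith
  have hcd' : c < d := by simp only [hc, hd]; linarith
  refine ⟨d / c, (one_lt_div hc0).mpr hcd', ?_⟩
  have hAN : A N ∈ l := hA.1.mem_of_mem trivial
  have hevAN : ∀ᶠ x in l, (1/c) * x ∈ A N := (hmul (1/c) (by positivity)).eventually hAN
  filter_upwards [hevAN, hl] with x hxA hx0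
  refine ⟨hx0, fun t ht1 htρ => ?_⟩
  set x' := (1/c) * x with hx'
  have hx'0 : 0 < x' := by positivity
  have hσx' : 0 < σ x' := hpos x' hx'0
  have hcx' : c * x' = x := by rw [hx', ← mul_assoc, mul_one_div_cancel hc0.ne', one_mul]
  have htc : t * c ∈ Icc c d := by
    constructor
    · nlinarith
    · have := (le_div_iff₀ hc0).mp htρ
      linarith [mul_comm t c]
  have hmem1 := hcd htc
  have hmem2 := hcd (left_mem_Icc.mpr hcd'.le)
  simp only [hF, mem_inter_iff, mem_iInter, mem_setOf_eq] at hmem1 hmem2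
  have hxmem : x' ∈ A N ∩ Ioi 0 := ⟨hxA, hx'0⟩
  obtain ⟨-, hb1⟩ := (hmem1.2 x' hxmem)
  obtain ⟨-, hb2⟩ := (hmem2.2 x' hxmem)
  -- hb1 : (t*c)^β * σ x' ≤ 2 * σ ((t*c)*x') ∧ σ ((t*c)*x') ≤ 2 * ((t*c)^β * σ x')
  -- hb2 : c^β * σ x' ≤ 2 * σ (c*x') ∧ σ (c*x') ≤ 2 * (c^β * σ x')
  have ht0 : (0:ℝ) < t := by linarith
  have htcx : (t * c) * x' = t * x := by rw [mul_assoc, hcx']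
  have hrw : (t * c) ^ β = t ^ β * c ^ β := Real.mul_rpow ht0.le hc0.le
  have hcb : 0 < c ^ β := Real.rpow_pos_of_pos hc0 β
  have htb : 0 < t ^ β := Real.rpow_pos_of_pos ht0 β
  rw [htcx] at hb1
  rw [hcx'] at hb2
  rw [hrw] at hb1
  constructor
  · nlinarith [hb1.2, hb2.1]
  · nlinarith [hb1.1, hb2.2]

lemma potter_inf (σ : ℝ → ℝ) (α ε : ℝ) (hα : 0 < α) (hε : 0 < ε)
    (hcont : ContinuousOn σ (Set.Ici 0)) (hpos : ∀ x > (0:ℝ), 0 < σ x)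
    (hRVinf : ∀ t > (0:ℝ), Tendsto (fun x => σ (t * x) / σ x) atTop (nhds (t ^ α))) :
    ∃ K, 1 ≤ K ∧ ∃ Y > (0:ℝ), ∀ y, Y ≤ y → ∀ t, 1 ≤ t →
      σ (t * y) ≤ K * t ^ (α + ε) * σ y := by
  obtain ⟨ρ, hρ, hev⟩ := unif_bound σ α atTop (eventually_gt_atTop 0)
    (fun c hc => Tendsto.const_mul_atTop hc tendsto_id) hcont hpos hRVinf
  have hρ0 : (0:ℝ) < ρ := by linarith
  obtain ⟨Y1, hY1⟩ := eventually_atTop.mp hev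
  have hstepev : ∀ᶠ y in atTop, σ (ρ * y) / σ y < ρ ^ (α + ε) :=
    (hRVinf ρ hρ0).eventually_lt_const (Real.rpow_lt_rpow_of_exponent_lt hρ (by linarith))
  obtain ⟨Y0, hY0'⟩ := eventually_atTop.mp hstepev
  set Y := max 1 (max Y0 Y1) with hY
  have hYpos : (0:ℝ) < Y := lt_of_lt_of_le one_pos (le_max_left _ _)
  have hstep : ∀ z, Y ≤ z → σ (ρ * z) ≤ ρ ^ (α + ε) * σ z := by
    intro z hz
    have hz0 : 0 < z := lt_of_lt_of_le hYpos hz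
    have := hY0' z (le_trans (le_trans (le_max_left _ _) (le_max_right _ _)) hz)
    rw [div_lt_iff₀ (hpos z hz0)] at this
    exact this.le
  have chain : ∀ k : ℕ, ∀ y, Y ≤ y → σ (ρ ^ k * y) ≤ (ρ ^ (α + ε)) ^ k * σ y := by
    intro k
    induction k with
    | zero => intro y _; simp
    | succ k ih =>
      intro y hy
      have hy0 : 0 < y := lt_of_lt_of_le hYpos hy
      have hzge : Y ≤ ρ ^ k * y := le_trans hy (le_mul_of_one_le_left hy0.le (one_le_pow₀ hρ.le))
      have h1 := hstep (ρ ^ k * y) hzge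
      have h2 := ih y hy
      have hb : 0 < ρ ^ (α + ε) := Real.rpow_pos_of_pos hρ0 _
      have heq : ρ ^ (k+1) * y = ρ * (ρ ^ k * y) := by ring
      rw [heq]
      calc σ (ρ * (ρ ^ k * y)) ≤ ρ ^ (α + ε) * σ (ρ ^ k * y) := h1
        _ ≤ ρ ^ (α + ε) * ((ρ ^ (α + ε)) ^ k * σ y) := by
            exact mul_le_mul_of_nonneg_left h2 hb.le
        _ = (ρ ^ (α + ε)) ^ (k + 1) * σ y := by ring
  refine ⟨max 1 (4 * ρ ^ α), le_max_left _ _, Y, hYpos, fun y hy t ht => ?_⟩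
  have hy0 : 0 < y := lt_of_lt_of_le hYpos hy
  have ht0 : (0:ℝ) < t := lt_of_lt_of_le one_pos ht
  set k := ⌊Real.logb ρ t⌋₊ with hk
  have hlogb : 0 ≤ Real.logb ρ t := Real.logb_nonneg hρ ht
  have hk1 : (ρ:ℝ) ^ k ≤ t := by
    have h1 : ρ ^ ((k:ℝ)) ≤ ρ ^ Real.logb ρ t :=
      Real.rpow_le_rpow_of_exponent_le hρ.le (Nat.floor_le hlogb)
    rw [Real.rpow_logb hρ0 (ne_of_gt hρ) ht0] at h1
    rwa [← Real.rpow_natCast]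
  have hk2 : t ≤ ρ ^ (k + 1) := by
    have h1 : ρ ^ Real.logb ρ t ≤ ρ ^ (((k:ℝ)) + 1) :=
      Real.rpow_le_rpow_of_exponent_le hρ.le (Nat.lt_floor_add_one _).le
    rw [Real.rpow_logb hρ0 (ne_of_gt hρ) ht0] at h1
    calc t ≤ ρ ^ (((k:ℝ)) + 1) := h1
      _ = ρ ^ ((((k+1):ℕ)):ℝ) := by push_cast; ring_nf
      _ = ρ ^ (k+1) := Real.rpow_natCast ρ (k+1)
  have hpk : (0:ℝ) < ρ ^ k := pow_pos hρ0 k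
  set r := t / ρ ^ k with hr
  have hr1 : 1 ≤ r := (one_le_div hpk).mpr hk1
  have hrρ : r ≤ ρ := by
    rw [hr, div_le_iff₀ hpk]
    calc t ≤ ρ ^ (k+1) := hk2
      _ = ρ * ρ ^ k := by ring
  clear_value k
  have hty : t * y = r * (ρ ^ k * y) := by rw [hr]; field_simp
  have hzge1 : Y1 ≤ ρ ^ k * y := le_trans (le_trans (le_max_right _ _) (le_max_right _ _))
    (le_trans hy (le_mul_of_one_le_left hy0.le (one_le_pow₀ hρ.le)))
  obtain ⟨hz0, huni⟩ := hY1 (ρ ^ k * y) hzge1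
  have hupper := (huni r hr1 hrρ).1
  have hrα : r ^ α ≤ ρ ^ α := Real.rpow_le_rpow (le_trans zero_le_one hr1) hrρ hα.le
  have hchain := chain k y hy
  have hconv : (ρ ^ (α + ε)) ^ k = (ρ ^ k : ℝ) ^ (α + ε) := by
    rw [← Real.rpow_natCast (ρ ^ (α + ε)) k, ← Real.rpow_natCast ρ k,
      ← Real.rpow_mul hρ0.le, ← Real.rpow_mul hρ0.le]
    ring_nf
  have hpow : (ρ ^ (α + ε)) ^ k ≤ t ^ (α + ε) := by
    rw [hconv]
    exact Real.rpow_le_rpow hpk.le hk1 (by linarith)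
  have hσy : 0 < σ y := hpos y hy0
  have hσz : 0 < σ (ρ ^ k * y) := hpos _ hz0
  have htpow : 0 < t ^ (α + ε) := Real.rpow_pos_of_pos ht0 _
  have hrα0 : 0 < r ^ α := Real.rpow_pos_of_pos (by linarith) _
  have hρα : 0 < ρ ^ α := Real.rpow_pos_of_pos hρ0 _
  calc σ (t * y) = σ (r * (ρ ^ k * y)) := by rw [hty]
    _ ≤ 4 * r ^ α * σ (ρ ^ k * y) := hupper
    _ ≤ 4 * ρ ^ α * ((ρ ^ (α + ε)) ^ k * σ y) := by
        apply mul_le_mul (by nlinarith) hchain hσz.le (by positivity)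
    _ ≤ 4 * ρ ^ α * (t ^ (α + ε) * σ y) := by
        apply mul_le_mul_of_nonneg_left (mul_le_mul_of_nonneg_right hpow hσy.le) (by positivity)
    _ = (4 * ρ ^ α) * t ^ (α + ε) * σ y := by ring
    _ ≤ max 1 (4 * ρ ^ α) * t ^ (α + ε) * σ y := by
        apply mul_le_mul_of_nonneg_right (mul_le_mul_of_nonneg_right (le_max_right _ _) htpow.le) hσy.le

lemma potter_zero (σ : ℝ → ℝ) (lam ε : ℝ) (hlam : 0 < lam) (hε : 0 < ε)
    (hcont : ContinuousOn σ (Set.Ici 0)) (hpos : ∀ x > (0:ℝ), 0 < σ x)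
    (hRV0 : ∀ t > (0:ℝ), Tendsto (fun x => σ (t * x) / σ x) (nhdsWithin 0 (Set.Ioi 0))
      (nhds (t ^ lam))) :
    ∃ K, 1 ≤ K ∧ ∃ a > (0:ℝ), ∀ x, 0 < x → ∀ t, 1 ≤ t → t * x ≤ a →
      σ (t * x) ≤ K * t ^ (lam + ε) * σ x ∧ t ^ (lam - ε) * σ x ≤ K * σ (t * x) := by
  have hl : ∀ᶠ x in nhdsWithin (0:ℝ) (Set.Ioi 0), 0 < x := by
    filter_upwards [eventually_mem_nhdsWithin] with x hx; exact hx
  have hmul : ∀ c : ℝ, 0 < c → Tendsto (fun x => c * x) (nhdsWithin (0:ℝ) (Set.Ioi 0))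
      (nhdsWithin (0:ℝ) (Set.Ioi 0)) := by
    intro c hc
    apply tendsto_nhdsWithin_of_tendsto_nhds_of_eventually_within
    · have h0 : Tendsto (fun x : ℝ => c * x) (nhds 0) (nhds (c * 0)) :=
        (continuous_mul_left c).tendsto 0
      rw [mul_zero] at h0
      exact h0.mono_left nhdsWithin_le_nhds
    · filter_upwards [eventually_mem_nhdsWithin] with x hx
      exact mul_pos hc hx
  obtain ⟨ρ, hρ, hev⟩ := unif_bound σ lam _ hl hmul hcont hpos hRV0
  have hρ0 : (0:ℝ) < ρ := by linarith
  have hstepev : ∀ᶠ x in nhdsWithin (0:ℝ) (Set.Ioi 0),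
      σ (ρ * x) / σ x ∈ Ioo (ρ ^ (lam - ε)) (ρ ^ (lam + ε)) :=
    (hRV0 ρ hρ0).eventually (Ioo_mem_nhds
      (Real.rpow_lt_rpow_of_exponent_lt hρ (by linarith))
      (Real.rpow_lt_rpow_of_exponent_lt hρ (by linarith)))
  have hall := hev.and hstepev
  obtain ⟨δ, hδmem, hδ⟩ := mem_nhdsGT_iff_exists_Ioc_subset.mp hall
  have hδ0 : (0:ℝ) < δ := hδmem
  have hstep : ∀ z, 0 < z → z ≤ δ →
      σ (ρ * z) ≤ ρ ^ (lam + ε) * σ z ∧ ρ ^ (lam - ε) * σ z ≤ σ (ρ * z) := by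
    intro z hz0 hzδ
    have hP := hδ ⟨hz0, hzδ⟩
    have hσz := hpos z hz0
    constructor
    · have := hP.2.2
      rw [div_lt_iff₀ hσz] at this
      linarith [this]
    · have := hP.2.1
      rw [lt_div_iff₀ hσz] at this
      linarith [this]
  have chain : ∀ k : ℕ, ∀ x, 0 < x → ρ ^ k * x ≤ δ →
      σ (ρ ^ k * x) ≤ (ρ ^ (lam + ε)) ^ k * σ x ∧
      (ρ ^ (lam - ε)) ^ k * σ x ≤ σ (ρ ^ k * x) := by
    intro k
    induction k with
    | zero => intro x hx0 _; simp
    | succ k ih =>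
      intro x hx0 hle
      have hmono : ρ ^ k * x ≤ ρ ^ (k+1) * x :=
        mul_le_mul_of_nonneg_right (pow_le_pow_right₀ hρ.le (Nat.le_succ k)) hx0.le
      have hkδ : ρ ^ k * x ≤ δ := le_trans hmono hle
      have hz0 : 0 < ρ ^ k * x := mul_pos (pow_pos hρ0 k) hx0
      obtain ⟨ih1, ih2⟩ := ih x hx0 hkδ
      obtain ⟨s1, s2⟩ := hstep (ρ ^ k * x) hz0 hkδ
      have hb1 : 0 < ρ ^ (lam + ε) := Real.rpow_pos_of_pos hρ0 _
      have hb2 : 0 < ρ ^ (lam - ε) := Real.rpow_pos_of_pos hρ0 _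
      have heq : ρ ^ (k+1) * x = ρ * (ρ ^ k * x) := by ring
      rw [heq]
      constructor
      · calc σ (ρ * (ρ ^ k * x)) ≤ ρ ^ (lam + ε) * σ (ρ ^ k * x) := s1
          _ ≤ ρ ^ (lam + ε) * ((ρ ^ (lam + ε)) ^ k * σ x) := mul_le_mul_of_nonneg_left ih1 hb1.le
          _ = (ρ ^ (lam + ε)) ^ (k+1) * σ x := by ring
      · calc (ρ ^ (lam - ε)) ^ (k+1) * σ x = ρ ^ (lam - ε) * ((ρ ^ (lam - ε)) ^ k * σ x) := by ring
          _ ≤ ρ ^ (lam - ε) * σ (ρ ^ k * x) := mul_le_mul_of_nonneg_left ih2 hb2.le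
          _ ≤ σ (ρ * (ρ ^ k * x)) := s2
  refine ⟨max 1 (max (4 * ρ ^ lam) (4 * ρ ^ |lam - ε|)), le_max_left _ _, δ, hδ0,
    fun x hx0 t ht htx => ?_⟩
  have ht0 : (0:ℝ) < t := lt_of_lt_of_le one_pos ht
  set k := ⌊Real.logb ρ t⌋₊ with hk
  have hlogb : 0 ≤ Real.logb ρ t := Real.logb_nonneg hρ ht
  have hk1 : (ρ:ℝ) ^ k ≤ t := by
    have h1 : ρ ^ ((k:ℝ)) ≤ ρ ^ Real.logb ρ t :=
      Real.rpow_le_rpow_of_exponent_le hρ.le (Nat.floor_le hlogb)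
    rw [Real.rpow_logb hρ0 (ne_of_gt hρ) ht0] at h1
    rwa [← Real.rpow_natCast]
  have hk2 : t ≤ ρ ^ (k + 1) := by
    have h1 : ρ ^ Real.logb ρ t ≤ ρ ^ (((k:ℝ)) + 1) :=
      Real.rpow_le_rpow_of_exponent_le hρ.le (Nat.lt_floor_add_one _).le
    rw [Real.rpow_logb hρ0 (ne_of_gt hρ) ht0] at h1
    calc t ≤ ρ ^ (((k:ℝ)) + 1) := h1
      _ = ρ ^ ((((k+1):ℕ)):ℝ) := by push_cast; ring_nf
      _ = ρ ^ (k+1) := Real.rpow_natCast ρ (k+1)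
  have hpk : (0:ℝ) < ρ ^ k := pow_pos hρ0 k
  set r := t / ρ ^ k with hr
  have hr1 : 1 ≤ r := (one_le_div hpk).mpr hk1
  have hrρ : r ≤ ρ := by
    rw [hr, div_le_iff₀ hpk]
    calc t ≤ ρ ^ (k+1) := hk2
      _ = ρ * ρ ^ k := by ring
  clear_value k
  have hty : t * x = r * (ρ ^ k * x) := by rw [hr]; field_simp
  have hz0 : 0 < ρ ^ k * x := mul_pos hpk hx0
  have hzδ : ρ ^ k * x ≤ δ :=
    le_trans (mul_le_mul_of_nonneg_right hk1 hx0.le) htx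
  obtain ⟨⟨-, hband⟩, -⟩ := hδ ⟨hz0, hzδ⟩
  obtain ⟨hb1, hb2⟩ := hband r hr1 hrρ
  obtain ⟨hc1, hc2⟩ := chain k x hx0 hzδ
  have hconvp : (ρ ^ (lam + ε)) ^ k = (ρ ^ k : ℝ) ^ (lam + ε) := by
    rw [← Real.rpow_natCast (ρ ^ (lam + ε)) k, ← Real.rpow_natCast ρ k,
      ← Real.rpow_mul hρ0.le, ← Real.rpow_mul hρ0.le]
    ring_nf
  have hconvm : (ρ ^ (lam - ε)) ^ k = (ρ ^ k : ℝ) ^ (lam - ε) := by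
    rw [← Real.rpow_natCast (ρ ^ (lam - ε)) k, ← Real.rpow_natCast ρ k,
      ← Real.rpow_mul hρ0.le, ← Real.rpow_mul hρ0.le]
    ring_nf
  have hσx : 0 < σ x := hpos x hx0
  have hσz : 0 < σ (ρ ^ k * x) := hpos _ hz0
  have hσtx : 0 < σ (t * x) := by
    have : 0 < t * x := mul_pos ht0 hx0
    exact hpos _ this
  have hrl0 : (0:ℝ) < r := by linarith
  have hrlam : r ^ lam ≤ ρ ^ lam := Real.rpow_le_rpow hrl0.le hrρ hlam.le
  have hrlam1 : 1 ≤ r ^ lam := Real.one_le_rpow hr1 hlam.le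
  have htpow : 0 < t ^ (lam + ε) := Real.rpow_pos_of_pos ht0 _
  have hKge : (4:ℝ) * ρ ^ lam ≤ max 1 (max (4 * ρ ^ lam) (4 * ρ ^ |lam - ε|)) :=
    le_trans (le_max_left _ _) (le_max_right _ _)
  have hKge2 : (4:ℝ) * ρ ^ |lam - ε| ≤ max 1 (max (4 * ρ ^ lam) (4 * ρ ^ |lam - ε|)) :=
    le_trans (le_max_right _ _) (le_max_right _ _)
  constructor
  · -- upper bound
    have hpow : (ρ ^ (lam + ε)) ^ k ≤ t ^ (lam + ε) := by
      rw [hconvp]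
      exact Real.rpow_le_rpow hpk.le hk1 (by linarith)
    have hρlam : 0 < ρ ^ lam := Real.rpow_pos_of_pos hρ0 _
    calc σ (t * x) = σ (r * (ρ ^ k * x)) := by rw [hty]
      _ ≤ 4 * r ^ lam * σ (ρ ^ k * x) := hb1
      _ ≤ 4 * ρ ^ lam * ((ρ ^ (lam + ε)) ^ k * σ x) := by
          apply mul_le_mul (by nlinarith) hc1 hσz.le (by positivity)
      _ ≤ 4 * ρ ^ lam * (t ^ (lam + ε) * σ x) := by
          apply mul_le_mul_of_nonneg_left (mul_le_mul_of_nonneg_right hpow hσx.le) (by positivity)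
      _ = (4 * ρ ^ lam) * t ^ (lam + ε) * σ x := by ring
      _ ≤ max 1 (max (4 * ρ ^ lam) (4 * ρ ^ |lam - ε|)) * t ^ (lam + ε) * σ x := by
          apply mul_le_mul_of_nonneg_right (mul_le_mul_of_nonneg_right hKge htpow.le) hσx.le
  · -- lower bound
    have habs : 0 < ρ ^ |lam - ε| := Real.rpow_pos_of_pos hρ0 _
    have h1 : t ^ (lam - ε) ≤ (ρ ^ k : ℝ) ^ (lam - ε) * ρ ^ |lam - ε| := by
      rcases le_or_gt 0 (lam - ε) with hc | hc
      · have e1 : t ^ (lam - ε) ≤ (ρ ^ (k+1) : ℝ) ^ (lam - ε) :=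
          Real.rpow_le_rpow ht0.le hk2 hc
        have e2 : (ρ ^ (k+1) : ℝ) ^ (lam - ε) = (ρ ^ k : ℝ) ^ (lam - ε) * ρ ^ (lam - ε) := by
          rw [pow_succ, Real.mul_rpow (pow_nonneg hρ0.le k) hρ0.le]
        have e3 : ρ ^ (lam - ε) ≤ ρ ^ |lam - ε| :=
          Real.rpow_le_rpow_of_exponent_le hρ.le (le_abs_self _)
        have hpk' : 0 < (ρ ^ k : ℝ) ^ (lam - ε) := Real.rpow_pos_of_pos hpk _
        calc t ^ (lam - ε) ≤ (ρ ^ k : ℝ) ^ (lam - ε) * ρ ^ (lam - ε) := by rw [← e2]; exact e1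
          _ ≤ (ρ ^ k : ℝ) ^ (lam - ε) * ρ ^ |lam - ε| := mul_le_mul_of_nonneg_left e3 hpk'.le
      · have e1 : t ^ (lam - ε) ≤ (ρ ^ k : ℝ) ^ (lam - ε) :=
          Real.rpow_le_rpow_of_nonpos hpk hk1 hc.le
        have e2 : (1:ℝ) ≤ ρ ^ |lam - ε| := Real.one_le_rpow hρ.le (abs_nonneg _)
        calc t ^ (lam - ε) ≤ (ρ ^ k : ℝ) ^ (lam - ε) := e1
          _ ≤ (ρ ^ k : ℝ) ^ (lam - ε) * ρ ^ |lam - ε| :=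
            le_mul_of_one_le_right (Real.rpow_pos_of_pos hpk (lam - ε)).le e2
    have h2 : (ρ ^ k : ℝ) ^ (lam - ε) * σ x ≤ 4 * σ (t * x) := by
      have e1 : (ρ ^ k : ℝ) ^ (lam - ε) * σ x ≤ σ (ρ ^ k * x) := by rw [← hconvm]; exact hc2
      have e2 : σ (ρ ^ k * x) ≤ 4 * σ (t * x) := by
        have e3 : σ (ρ ^ k * x) ≤ r ^ lam * σ (ρ ^ k * x) :=
          le_mul_of_one_le_left hσz.le hrlam1
        have e4 : r ^ lam * σ (ρ ^ k * x) ≤ 4 * σ (r * (ρ ^ k * x)) := hb2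
        rw [← hty] at e4
        linarith
      linarith
    calc t ^ (lam - ε) * σ x ≤ ((ρ ^ k : ℝ) ^ (lam - ε) * ρ ^ |lam - ε|) * σ x :=
          mul_le_mul_of_nonneg_right h1 hσx.le
      _ = ρ ^ |lam - ε| * ((ρ ^ k : ℝ) ^ (lam - ε) * σ x) := by ring
      _ ≤ ρ ^ |lam - ε| * (4 * σ (t * x)) := mul_le_mul_of_nonneg_left h2 habs.le
      _ = (4 * ρ ^ |lam - ε|) * σ (t * x) := by ring
      _ ≤ max 1 (max (4 * ρ ^ lam) (4 * ρ ^ |lam - ε|)) * σ (t * x) :=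
          mul_le_mul_of_nonneg_right hKge2 hσtx.le

/-- Potter-type bound for a function regularly varying at 0 with index λ and at ∞ with index α. -/
theorem stmt0 (σ : ℝ → ℝ) (lam α : ℝ) (hlam : lam ∈ Set.Ioo (0:ℝ) 1)
    (hα : α ∈ Set.Ioo (0:ℝ) 1)
    (hcont : ContinuousOn σ (Set.Ici 0)) (hpos : ∀ x > (0:ℝ), 0 < σ x)
    (hRV0 : ∀ t > (0:ℝ), Tendsto (fun x => σ (t * x) / σ x) (nhdsWithin 0 (Set.Ioi 0))
      (nhds (t ^ lam)))
    (hRVinf : ∀ t > (0:ℝ), Tendsto (fun x => σ (t * x) / σ x) atTop (nhds (t ^ α))) :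
    ∀ ε > (0:ℝ), ∃ C > (0:ℝ), ∃ a > (0:ℝ), ∀ x : ℝ, 0 < x → x ≤ a → ∀ t > (0:ℝ),
      (t ≤ 1 → σ (t * x) / σ x ≤ C * t ^ (min (lam - ε) (α + ε))) ∧
      (1 < t → σ (t * x) / σ x ≤ C * t ^ (max (α + ε) (lam + ε))) := by
  intro ε hε
  obtain ⟨K1, hK1, Y1, hY1pos, hP1⟩ := potter_inf σ α ε hα.1 hε hcont hpos hRVinf
  obtain ⟨K2, hK2, a2, ha2pos, hP2⟩ := potter_zero σ lam ε hlam.1 hε hcont hpos hRV0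
  set a := min a2 Y1 with ha
  have ha0 : 0 < a := lt_min ha2pos hY1pos
  have haa2 : a ≤ a2 := min_le_left _ _
  have haY1 : a ≤ Y1 := min_le_right _ _
  have hne : (Icc a Y1).Nonempty := ⟨a, le_refl a, haY1⟩
  have hsub : Icc a Y1 ⊆ Ici 0 := fun w hw => le_trans ha0.le hw.1
  obtain ⟨z, hzmem, hzmax⟩ := isCompact_Icc.exists_isMaxOn hne (hcont.mono hsub)
  set M := σ z with hM
  have hσa : 0 < σ a := hpos a ha0
  have haM : σ a ≤ M := hzmax ⟨le_refl a, haY1⟩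
  set K3 := M / σ a with hK3def
  have hK3 : 1 ≤ K3 := (one_le_div hσa).mpr haM
  set C := K1 * K2 * K3 with hC
  have h12 : 1 ≤ K1 * K2 := by nlinarith [mul_nonneg (sub_nonneg.mpr hK1) (sub_nonneg.mpr hK2)]
  have h13 : 1 ≤ K1 * K3 := by nlinarith [mul_nonneg (sub_nonneg.mpr hK1) (sub_nonneg.mpr hK3)]
  have hC1 : 1 ≤ C := by
    rw [hC]
    nlinarith [mul_nonneg (sub_nonneg.mpr h12) (sub_nonneg.mpr hK3)]
  have hC0 : 0 < C := by linarith
  have hK2C : K2 ≤ C := by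
    rw [hC]
    nlinarith [mul_nonneg (by linarith : (0:ℝ) ≤ K2) (sub_nonneg.mpr h13)]
  refine ⟨C, hC0, a, ha0, fun x hx0 hxa t ht0 => ?_⟩
  have hσx : 0 < σ x := hpos x hx0
  have hu0 : 0 < max (α + ε) (lam + ε) := lt_of_lt_of_le (by linarith [hα.1]) (le_max_left _ _)
  constructor
  · -- t ≤ 1
    intro ht1
    have htx0 : 0 < t * x := mul_pos ht0 hx0
    have h1t : 1 ≤ 1 / t := one_le_one_div ht0 ht1
    have heq : (1 / t) * (t * x) = x := by field_simp
    have hcond : (1 / t) * (t * x) ≤ a2 := by rw [heq]; exact le_trans hxa haa2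
    have key := (hP2 (t * x) htx0 (1 / t) h1t hcond).2
    rw [heq] at key
    -- key : (1/t) ^ (lam - ε) * σ (t*x) ≤ K2 * σ x
    have hinv : (1 / t) ^ (lam - ε) = (t ^ (lam - ε))⁻¹ := by
      rw [one_div, Real.inv_rpow ht0.le]
    have htc0 : 0 < t ^ (lam - ε) := Real.rpow_pos_of_pos ht0 _
    have key2 : σ (t * x) ≤ K2 * t ^ (lam - ε) * σ x := by
      rw [hinv] at key
      rw [inv_mul_le_iff₀ htc0] at key
      calc σ (t * x) ≤ t ^ (lam - ε) * (K2 * σ x) := key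
        _ = K2 * t ^ (lam - ε) * σ x := by ring
    have hle : t ^ (lam - ε) ≤ t ^ (min (lam - ε) (α + ε)) :=
      Real.rpow_le_rpow_of_exponent_ge ht0 ht1 (min_le_left _ _)
    have hl0 : 0 < t ^ (min (lam - ε) (α + ε)) := Real.rpow_pos_of_pos ht0 _
    rw [div_le_iff₀ hσx]
    calc σ (t * x) ≤ K2 * t ^ (lam - ε) * σ x := key2
      _ ≤ C * t ^ (min (lam - ε) (α + ε)) * σ x := by
          apply mul_le_mul_of_nonneg_right _ hσx.le
          calc K2 * t ^ (lam - ε) ≤ K2 * t ^ (min (lam - ε) (α + ε)) :=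
                mul_le_mul_of_nonneg_left hle (by linarith)
            _ ≤ C * t ^ (min (lam - ε) (α + ε)) := mul_le_mul_of_nonneg_right hK2C hl0.le
  · -- 1 < t
    intro ht1
    set u := max (α + ε) (lam + ε) with hu
    have htx0 : 0 < t * x := mul_pos ht0 hx0
    have htu0 : 0 < t ^ u := Real.rpow_pos_of_pos ht0 _
    rw [div_le_iff₀ hσx]
    rcases le_or_gt (t * x) a with hcase | hcase
    · -- t*x ≤ a : both small
      have key := (hP2 x hx0 t ht1.le (le_trans hcase haa2)).1
      have hle : t ^ (lam + ε) ≤ t ^ u :=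
        Real.rpow_le_rpow_of_exponent_le ht1.le (le_max_right _ _)
      calc σ (t * x) ≤ K2 * t ^ (lam + ε) * σ x := key
        _ ≤ C * t ^ u * σ x := by
            apply mul_le_mul_of_nonneg_right _ hσx.le
            calc K2 * t ^ (lam + ε) ≤ K2 * t ^ u := mul_le_mul_of_nonneg_left hle (by linarith)
              _ ≤ C * t ^ u := mul_le_mul_of_nonneg_right hK2C htu0.le
    · -- a < t*x
      have hax : 1 ≤ a / x := (one_le_div hx0).mpr hxa
      have heqa : (a / x) * x = a := div_mul_cancel₀ a (ne_of_gt hx0)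
      have hB1 := (hP2 x hx0 (a / x) hax (by rw [heqa]; exact haa2)).1
      rw [heqa] at hB1
      -- hB1 : σ a ≤ K2 * (a/x) ^ (lam+ε) * σ x
      have hta1 : 1 ≤ (t * x) / a := (one_le_div ha0).mpr hcase.le
      have htau0 : 0 < ((t * x) / a) ^ u := Real.rpow_pos_of_pos (by positivity) _
      have hB2 : σ (t * x) ≤ K1 * K3 * ((t * x) / a) ^ u * σ a := by
        rcases le_or_gt (t * x) Y1 with hc2 | hc2
        · have hmax : σ (t * x) ≤ M := hzmax ⟨hcase.le, hc2⟩
          have h1 : (1:ℝ) ≤ ((t * x) / a) ^ u := Real.one_le_rpow hta1 hu0.le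
          have hMa : M = K3 * σ a := by rw [hK3def]; field_simp
          have hK30 : (0:ℝ) ≤ K3 := by linarith
          calc σ (t * x) ≤ K3 * σ a := by rw [← hMa]; exact hmax
            _ ≤ K1 * K3 * ((t * x) / a) ^ u * σ a := by
                apply mul_le_mul_of_nonneg_right _ hσa.le
                calc K3 ≤ K1 * K3 := le_mul_of_one_le_left hK30 hK1
                  _ ≤ K1 * K3 * ((t * x) / a) ^ u := le_mul_of_one_le_right (by nlinarith) h1
        · have h1t : 1 ≤ (t * x) / Y1 := (one_le_div hY1pos).mpr hc2.le
          have heqY : ((t * x) / Y1) * Y1 = t * x := div_mul_cancel₀ _ (ne_of_gt hY1pos)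
          have key := hP1 Y1 le_rfl ((t * x) / Y1) h1t
          rw [heqY] at key
          -- key : σ (t*x) ≤ K1 * ((t*x)/Y1) ^ (α+ε) * σ Y1
          have hσY1 : σ Y1 ≤ K3 * σ a := by
            have : σ Y1 ≤ M := hzmax ⟨haY1, le_refl Y1⟩
            have hMa : M = K3 * σ a := by rw [hK3def]; field_simp
            linarith [hMa ▸ this]
          have hb1 : (t * x) / Y1 ≤ (t * x) / a :=
            div_le_div_of_nonneg_left htx0.le ha0 haY1
          have hb2 : ((t * x) / Y1) ^ (α + ε) ≤ ((t * x) / a) ^ (α + ε) :=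
            Real.rpow_le_rpow (by positivity) hb1 (by linarith [hα.1])
          have hb3 : ((t * x) / a) ^ (α + ε) ≤ ((t * x) / a) ^ u :=
            Real.rpow_le_rpow_of_exponent_le hta1 (le_max_left _ _)
          have hσY1pos : 0 < σ Y1 := hpos Y1 hY1pos
          have hpow0 : 0 < ((t * x) / Y1) ^ (α + ε) := Real.rpow_pos_of_pos (by positivity) _
          calc σ (t * x) ≤ K1 * ((t * x) / Y1) ^ (α + ε) * σ Y1 := key
            _ ≤ K1 * ((t * x) / a) ^ u * σ Y1 := by
                apply mul_le_mul_of_nonneg_right _ hσY1pos.le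
                exact mul_le_mul_of_nonneg_left (le_trans hb2 hb3) (by linarith)
            _ ≤ K1 * ((t * x) / a) ^ u * (K3 * σ a) := by
                apply mul_le_mul_of_nonneg_left hσY1 (by positivity)
            _ = K1 * K3 * ((t * x) / a) ^ u * σ a := by ring
      -- combine
      have hax0 : 0 < (a / x) ^ (lam + ε) := Real.rpow_pos_of_pos (by positivity) _
      have hb4 : (a / x) ^ (lam + ε) ≤ (a / x) ^ u :=
        Real.rpow_le_rpow_of_exponent_le hax (le_max_right _ _)
      have hmuleq : ((t * x) / a) ^ u * (a / x) ^ u = t ^ u := by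
        rw [← Real.mul_rpow (by positivity) (by positivity)]
        congr 1
        field_simp
      calc σ (t * x) ≤ K1 * K3 * ((t * x) / a) ^ u * σ a := hB2
        _ ≤ K1 * K3 * ((t * x) / a) ^ u * (K2 * (a / x) ^ (lam + ε) * σ x) := by
            apply mul_le_mul_of_nonneg_left hB1 (by positivity)
        _ ≤ K1 * K3 * ((t * x) / a) ^ u * (K2 * (a / x) ^ u * σ x) := by
            apply mul_le_mul_of_nonneg_left _ (by positivity)
            apply mul_le_mul_of_nonneg_right _ hσx.le
            exact mul_le_mul_of_nonneg_left hb4 (by linarith)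
        _ = (K1 * K2 * K3) * (((t * x) / a) ^ u * (a / x) ^ u) * σ x := by ring
        _ = C * t ^ u * σ x := by rw [hmuleq, ← hC]
end

section
/- Let σ : (0,∞) → (0,∞) be continuous and regularly varying at 0 with index λ ∈ (0,1), and let δ(c) be defined for c > 0 by c·δ(c)/σ(δ(c)) = 1 with δ(c) → 0 as c → ∞. Then δ is regularly varying at infinity with index 1/(λ−1). -/
open Filter Set Real

/-- Baire-category step: if `k` is continuous and `k (x+u) - k x → 0` as `x → ∞`
for every fixed `u`, then the same holds along any sequence `z n → ∞` with
converging shifts `v n → v₀`. -/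
lemma uct_seq (k : ℝ → ℝ) (hk : Continuous k)
    (hp : ∀ u : ℝ, Tendsto (fun x => k (x + u) - k x) atTop (nhds 0))
    (z v : ℕ → ℝ) (v₀ : ℝ) (hz : Tendsto z atTop atTop)
    (hv : Tendsto v atTop (nhds v₀)) :
    Tendsto (fun n => k (z n + v n) - k (z n)) atTop (nhds 0) := by
  by_contra hcon
  rw [Metric.tendsto_atTop] at hcon
  push_neg at hcon
  obtain ⟨ε, hε, hfreq⟩ := hcon
  set B : ℕ → Set ℝ := fun m => {u | ∀ n ≥ m, |k (z n + u) - k (z n)| ≤ ε / 3} with hB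
  have hclosed : ∀ m, IsClosed (B m) := by
    intro m
    have : B m = ⋂ (n : ℕ), ⋂ (_ : n ≥ m), {u : ℝ | |k (z n + u) - k (z n)| ≤ ε / 3} := by
      ext u; simp [hB]
    rw [this]
    refine isClosed_iInter fun n => isClosed_iInter fun _ => ?_
    exact isClosed_le (((hk.comp (continuous_const.add continuous_id)).sub
      continuous_const).abs) continuous_const
  have hcover : ⋃ m, B m = Set.univ := by
    rw [Set.eq_univ_iff_forall]
    intro u
    have h1 : Tendsto (fun n => k (z n + u) - k (z n)) atTop (nhds 0) := (hp u).comp hz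
    rw [Metric.tendsto_atTop] at h1
    obtain ⟨N, hN⟩ := h1 (ε / 3) (by positivity)
    refine Set.mem_iUnion.2 ⟨N, fun n hn => ?_⟩
    have := hN n hn
    rw [Real.dist_eq, sub_zero] at this
    exact this.le
  obtain ⟨m₀, α, hα⟩ := nonempty_interior_of_iUnion_of_closed hclosed hcover
  rw [mem_interior_iff_mem_nhds, Metric.mem_nhds_iff] at hα
  obtain ⟨r, hr, hball⟩ := hα
  set u₀ : ℝ := α - v₀ with hu₀
  have hy : Tendsto (fun n => z n + v n) atTop atTop := by
    apply tendsto_atTop_mono' _ _ (tendsto_atTop_add_const_right atTop (v₀ - 1) hz)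
    filter_upwards [hv.eventually (eventually_ge_nhds (show v₀ - 1 < v₀ by linarith))] with n hn
    linarith
  have h1 : Tendsto (fun n => k ((z n + v n) + u₀) - k (z n + v n)) atTop (nhds 0) :=
    (hp u₀).comp hy
  rw [Metric.tendsto_atTop] at h1
  obtain ⟨N₁, hN₁⟩ := h1 (ε / 3) (by positivity)
  have hE2 : ∀ᶠ n in atTop, v n + u₀ ∈ Metric.ball α r := by
    have : Tendsto (fun n => v n + u₀) atTop (nhds (v₀ + u₀)) := hv.add_const u₀
    have hαeq : v₀ + u₀ = α := by rw [hu₀]; ring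
    rw [hαeq] at this
    exact this.eventually (Metric.ball_mem_nhds α hr)
  rw [eventually_atTop] at hE2
  obtain ⟨N₂, hN₂⟩ := hE2
  obtain ⟨n, hn, hdist⟩ := hfreq (max m₀ (max N₁ N₂))
  have hnm₀ : m₀ ≤ n := le_trans (le_max_left _ _) hn
  have hnN₁ : N₁ ≤ n := le_trans (le_trans (le_max_left _ _) (le_max_right _ _)) hn
  have hnN₂ : N₂ ≤ n := le_trans (le_trans (le_max_right _ _) (le_max_right _ _)) hn
  have t1 : |k (z n + v n + u₀) - k (z n + v n)| < ε / 3 := by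
    have := hN₁ n hnN₁
    rwa [Real.dist_eq, sub_zero] at this
  have hmem : v n + u₀ ∈ B m₀ := hball (hN₂ n hnN₂)
  have t2 : |k (z n + (v n + u₀)) - k (z n)| ≤ ε / 3 := hmem n hnm₀
  rw [Real.dist_eq, sub_zero] at hdist
  have hassoc : z n + (v n + u₀) = z n + v n + u₀ := by ring
  rw [hassoc] at t2
  have tri : |k (z n + v n) - k (z n)| ≤
      |k (z n + v n) - k (z n + v n + u₀)| + |k (z n + v n + u₀) - k (z n)| :=
    abs_sub_le _ _ _
  rw [abs_sub_comm (k (z n + v n)) (k (z n + v n + u₀))] at tri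
  linarith

/-- Bounded-shift version via Bolzano–Weierstrass. -/
lemma uct_bdd (k : ℝ → ℝ) (hk : Continuous k)
    (hp : ∀ u : ℝ, Tendsto (fun x => k (x + u) - k x) atTop (nhds 0))
    (z v : ℕ → ℝ) (C : ℝ) (hz : Tendsto z atTop atTop)
    (hv : ∀ n, v n ∈ Set.Icc (-C) C) :
    Tendsto (fun n => k (z n + v n) - k (z n)) atTop (nhds 0) := by
  apply tendsto_of_subseq_tendsto
  intro ns hns
  obtain ⟨a, _, φ, hφ, hvφ⟩ := (isCompact_Icc (a := -C) (b := C)).tendsto_subseq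
    (fun n => hv (ns n))
  exact ⟨φ, uct_seq k hk hp (fun n => z (ns (φ n))) (fun n => v (ns (φ n))) a
    (hz.comp (hns.comp hφ.tendsto_atTop)) hvφ⟩

/-- Uniformity: eventually `|k (x+u) - k x| ≤ η` for all `|u| ≤ 1`. -/
lemma uct_unif (k : ℝ → ℝ) (hk : Continuous k)
    (hp : ∀ u : ℝ, Tendsto (fun x => k (x + u) - k x) atTop (nhds 0))
    (η : ℝ) (hη : 0 < η) :
    ∃ X : ℝ, ∀ x ≥ X, ∀ u : ℝ, |u| ≤ 1 → |k (x + u) - k x| ≤ η := by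
  by_contra hcon
  push_neg at hcon
  choose x hx u hu hgt using hcon
  have hz : Tendsto (fun n : ℕ => x ((n : ℕ) : ℝ)) atTop atTop :=
    tendsto_atTop_mono (fun n => hx ((n : ℕ) : ℝ)) tendsto_natCast_atTop_atTop
  have hbig := uct_bdd k hk hp (fun n : ℕ => x ((n : ℕ) : ℝ)) (fun n : ℕ => u ((n : ℕ) : ℝ)) 1
    hz (fun n => abs_le.mp (hu _))
  rw [Metric.tendsto_atTop] at hbig
  obtain ⟨N, hN⟩ := hbig η hη
  have := hN N le_rfl
  rw [Real.dist_eq, sub_zero] at this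
  exact absurd (hgt ((N : ℕ) : ℝ)) (by push_neg; exact this.le)

/-- Chaining/Potter step: a uniform small-shift bound propagates to all shifts. -/
lemma chain_bd (k : ℝ → ℝ) (X η : ℝ) (hη : 0 ≤ η)
    (h : ∀ x ≥ X, ∀ u : ℝ, |u| ≤ 1 → |k (x + u) - k x| ≤ η) :
    ∀ x y : ℝ, X ≤ x → X ≤ y → |k y - k x| ≤ η * (|y - x| + 1) := by
  have key : ∀ n : ℕ, ∀ x : ℝ, X ≤ x → ∀ d : ℝ, 0 ≤ d → d ≤ n + 1 →
      |k (x + d) - k x| ≤ η * (n + 1) := by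
    intro n
    induction n with
    | zero =>
      intro x hx d hd0 hd1
      have := h x hx d (by rw [abs_of_nonneg hd0]; simpa using hd1)
      simpa using this
    | succ n ih =>
      intro x hx d hd0 hd1
      by_cases hcase : d ≤ n + 1
      · have := ih x hx d hd0 hcase
        have hle : η * ((n : ℝ) + 1) ≤ η * ((n : ℝ) + 1 + 1) := by nlinarith
        push_cast
        push_cast at this
        linarith
      · push_neg at hcase
        have h1 : |k ((x + 1) + (d - 1)) - k (x + 1)| ≤ η * (n + 1) :=
          ih (x + 1) (by linarith) (d - 1) (by linarith) (by push_cast at hd1 ⊢; linarith)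
        have h2 : |k (x + 1) - k x| ≤ η := by
          have := h x hx 1 (by norm_num)
          simpa using this
        have heq : (x + 1) + (d - 1) = x + d := by ring
        rw [heq] at h1
        have tri : |k (x + d) - k x| ≤ |k (x + d) - k (x + 1)| + |k (x + 1) - k x| :=
          abs_sub_le _ _ _
        push_cast
        linarith [h1]
  intro x y hx hy
  rcases le_total x y with hxy | hxy
  · set d := y - x with hd
    have hd0 : 0 ≤ d := by simp [hd]; linarith
    set n := ⌊d⌋₊ with hn
    have hdn : d ≤ (n : ℝ) + 1 := (Nat.lt_floor_add_one d).le
    have := key n x hx d hd0 hdn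
    have hxd : x + d = y := by rw [hd]; ring
    rw [hxd] at this
    have hnle : (n : ℝ) ≤ |y - x| := by
      rw [abs_of_nonneg (by linarith)]
      exact Nat.floor_le hd0
    calc |k y - k x| ≤ η * ((n : ℝ) + 1) := this
      _ ≤ η * (|y - x| + 1) := by nlinarith
  · set d := x - y with hd
    have hd0 : 0 ≤ d := by simp [hd]; linarith
    set n := ⌊d⌋₊ with hn
    have hdn : d ≤ (n : ℝ) + 1 := (Nat.lt_floor_add_one d).le
    have := key n y hy d hd0 hdn
    have hxd : y + d = x := by rw [hd]; ring
    rw [hxd] at this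
    have hnle : (n : ℝ) ≤ |y - x| := by
      rw [abs_sub_comm, abs_of_nonneg (by linarith)]
      exact Nat.floor_le hd0
    rw [abs_sub_comm]
    calc |k x - k y| ≤ η * ((n : ℝ) + 1) := this
      _ ≤ η * (|y - x| + 1) := by nlinarith

lemma bound_helper (μ A B L : ℝ) (hμ : 0 < μ) (h1 : B ≤ μ / 2 * (A + 1))
    (h2 : μ * A - L ≤ B) : A ≤ 2 / μ * L + 1 := by
  have h3 : μ / 2 * A ≤ L + μ / 2 := by nlinarith
  have h4 : A = 2 / μ * (μ / 2 * A) := by field_simp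
  rw [h4]
  have h6 : (0:ℝ) ≤ 2 / μ := by positivity
  calc 2 / μ * (μ / 2 * A) ≤ 2 / μ * (L + μ / 2) := mul_le_mul_of_nonneg_left h3 h6
    _ = 2 / μ * L + 1 := by field_simp

/-- If σ ∈ RV_0(λ) with λ ∈ (0,1) and c·δ(c)/σ(δ(c)) = 1 with δ(c) → 0 as c → ∞,
then δ is regularly varying at infinity with index 1/(λ-1). -/
theorem stmt4 (σ δ : ℝ → ℝ) (lam : ℝ) (hlam : lam ∈ Set.Ioo (0:ℝ) 1)
    (hcont : ContinuousOn σ (Set.Ioi 0)) (hpos : ∀ x > (0:ℝ), 0 < σ x)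
    (hRV0 : ∀ t > (0:ℝ), Tendsto (fun x => σ (t * x) / σ x) (nhdsWithin 0 (Set.Ioi 0))
      (nhds (t ^ lam)))
    (hδpos : ∀ c > (0:ℝ), 0 < δ c)
    (hδeq : ∀ c > (0:ℝ), c * δ c / σ (δ c) = 1)
    (hδlim : Tendsto δ atTop (nhds 0)) :
    ∀ t > (0:ℝ), Tendsto (fun c => δ (t * c) / δ c) atTop
      (nhds (t ^ (1 / (lam - 1)))) := by
  intro t ht
  obtain ⟨hlam0, hlam1⟩ := hlam
  set μ : ℝ := 1 - lam with hμdef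
  have hμ : 0 < μ := by rw [hμdef]; linarith
  set k : ℝ → ℝ := fun x => Real.log (σ (Real.exp (-x))) + lam * x with hkdef
  have hσe : ∀ x : ℝ, 0 < σ (Real.exp (-x)) := fun x => hpos _ (Real.exp_pos _)
  have hk : Continuous k := by
    have h1 : Continuous fun x : ℝ => σ (Real.exp (-x)) :=
      hcont.comp_continuous (Real.continuous_exp.comp continuous_neg)
        (fun x => Set.mem_Ioi.2 (Real.exp_pos _))
    exact (h1.log (fun x => (hσe x).ne')).add (continuous_const.mul continuous_id)
  have hp : ∀ u : ℝ, Tendsto (fun x => k (x + u) - k x) atTop (nhds 0) := by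
    intro u
    have he : Tendsto (fun x : ℝ => Real.exp (-x)) atTop (nhdsWithin 0 (Set.Ioi 0)) := by
      apply tendsto_nhdsWithin_of_tendsto_nhds_of_eventually_within
      · exact Real.tendsto_exp_atBot.comp tendsto_neg_atTop_atBot
      · exact Eventually.of_forall fun x => Set.mem_Ioi.2 (Real.exp_pos _)
    have hT := (hRV0 (Real.exp (-u)) (Real.exp_pos _)).comp he
    have hpow : (0:ℝ) < Real.exp (-u) ^ lam := Real.rpow_pos_of_pos (Real.exp_pos _) _
    have hlog := hT.log hpow.ne'
    have hval : Real.log (Real.exp (-u) ^ lam) = lam * (-u) := by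
      rw [Real.log_rpow (Real.exp_pos _), Real.log_exp]
    rw [hval] at hlog
    have hlog2 : Tendsto (fun x : ℝ =>
        Real.log (σ (Real.exp (-(x + u)))) - Real.log (σ (Real.exp (-x))))
        atTop (nhds (lam * (-u))) := by
      apply hlog.congr
      intro x
      have he1 : Real.exp (-u) * Real.exp (-x) = Real.exp (-(x + u)) := by
        rw [← Real.exp_add]; ring_nf
      show Real.log (σ (Real.exp (-u) * Real.exp (-x)) / σ (Real.exp (-x))) = _
      rw [Real.log_div (by rw [he1]; exact (hσe _).ne') (hσe _).ne', he1]
    have h2 := hlog2.add_const (lam * u)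
    have hz0 : lam * (-u) + lam * u = 0 := by ring
    rw [hz0] at h2
    apply h2.congr
    intro x
    simp only [hkdef]
    ring
  -- the functional equation in log coordinates
  have hXfact : ∀ c > (0:ℝ), k (-Real.log (δ c)) = Real.log c - μ * (-Real.log (δ c)) := by
    intro c hc
    have hdc := hδpos c hc
    have hσc := hpos _ hdc
    have heq : σ (δ c) = c * δ c := ((div_eq_one_iff_eq hσc.ne').mp (hδeq c hc)).symm
    simp only [hkdef, neg_neg, Real.exp_log hdc, heq, Real.log_mul hc.ne' hdc.ne', hμdef]
    ring
  set Xf : ℝ → ℝ := fun c => -Real.log (δ c) with hXf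
  set Yf : ℝ → ℝ := fun c => -Real.log (δ (t * c)) with hYf
  set Vf : ℝ → ℝ := fun c => Yf c - Xf c with hVf
  have htc : Tendsto (fun c : ℝ => t * c) atTop atTop :=
    Tendsto.const_mul_atTop ht tendsto_id
  have hδne : Tendsto δ atTop (nhdsWithin 0 {(0:ℝ)}ᶜ) := by
    apply tendsto_nhdsWithin_of_tendsto_nhds_of_eventually_within _ hδlim
    filter_upwards [eventually_gt_atTop (0:ℝ)] with c hc
    exact (hδpos c hc).ne'
  have hXtop : Tendsto Xf atTop atTop :=
    tendsto_neg_atBot_atTop.comp (Real.tendsto_log_nhdsNE_zero.comp hδne)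
  have hδne' : Tendsto (fun c => δ (t * c)) atTop (nhdsWithin 0 {(0:ℝ)}ᶜ) := by
    apply tendsto_nhdsWithin_of_tendsto_nhds_of_eventually_within _ (hδlim.comp htc)
    filter_upwards [htc.eventually (eventually_gt_atTop (0:ℝ))] with c hc
    exact (hδpos _ hc).ne'
  have hYtop : Tendsto Yf atTop atTop :=
    tendsto_neg_atBot_atTop.comp (Real.tendsto_log_nhdsNE_zero.comp hδne')
  have hstar : ∀ᶠ c in atTop, k (Yf c) - k (Xf c) = Real.log t - μ * Vf c := by
    filter_upwards [eventually_gt_atTop (0:ℝ), htc.eventually (eventually_gt_atTop (0:ℝ))]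
      with c hc htc'
    have h1 := hXfact c hc
    have h2 := hXfact (t * c) htc'
    rw [Real.log_mul ht.ne' hc.ne'] at h2
    simp only [hXf, hYf, hVf] at *
    rw [h1, h2]
    ring
  -- Step A : boundedness of Vf
  obtain ⟨W, hW⟩ := uct_unif k hk hp (μ / 2) (by positivity)
  have hchain := chain_bd k W (μ / 2) (by positivity) hW
  set C : ℝ := (2 / μ) * |Real.log t| + 1 with hC
  have hC0 : 0 ≤ C := by
    rw [hC]
    have h5 : 0 ≤ (2 / μ) * |Real.log t| :=
      mul_nonneg (div_nonneg (by norm_num) hμ.le) (abs_nonneg _)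
    linarith
  have hVbdd : ∀ᶠ c in atTop, |Vf c| ≤ C := by
    filter_upwards [hstar, hXtop.eventually (eventually_ge_atTop W),
      hYtop.eventually (eventually_ge_atTop W)] with c hc hX hY
    have h1 : |k (Yf c) - k (Xf c)| ≤ μ / 2 * (|Yf c - Xf c| + 1) := hchain _ _ hX hY
    rw [hc] at h1
    have hVeq : Yf c - Xf c = Vf c := rfl
    rw [hVeq] at h1
    have h2 : μ * |Vf c| - |Real.log t| ≤ |Real.log t - μ * Vf c| := by
      have h3 := abs_sub_abs_le_abs_sub (μ * Vf c) (Real.log t)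
      rw [abs_sub_comm (μ * Vf c) (Real.log t)] at h3
      rw [abs_mul, abs_of_pos hμ] at h3
      linarith
    rw [hC]
    exact bound_helper μ (|Vf c|) (|Real.log t - μ * Vf c|) (|Real.log t|) hμ h1 h2
  -- key limit
  have hK : Tendsto (fun c => k (Yf c) - k (Xf c)) atTop (nhds 0) := by
    rw [tendsto_iff_seq_tendsto]
    intro cs hcs
    set z : ℕ → ℝ := fun n => Xf (cs n) with hzdef
    set v : ℕ → ℝ := fun n => Vf (cs n) with hvdef
    set v' : ℕ → ℝ := fun n => max (-C) (min C (v n)) with hv'def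
    have hzt : Tendsto z atTop atTop := hXtop.comp hcs
    have hv'mem : ∀ n, v' n ∈ Set.Icc (-C) C :=
      fun n => ⟨le_max_left _ _, max_le (by linarith) (min_le_left _ _)⟩
    have hveq : ∀ᶠ n in atTop, v' n = v n := by
      filter_upwards [hcs.eventually hVbdd] with n hn
      obtain ⟨hl, hr⟩ := abs_le.mp hn
      rw [hv'def]
      simp only []
      rw [min_eq_right hr, max_eq_right hl]
    have h0 := uct_bdd k hk hp z v' C hzt hv'mem
    apply h0.congr'
    filter_upwards [hveq] with n hn
    rw [hn]
    show k (z n + v n) - k (z n) = k (Yf (cs n)) - k (Xf (cs n))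
    have : z n + v n = Yf (cs n) := by simp only [hzdef, hvdef, hVf]; ring
    rw [this]
  -- conclude V limit
  have h1 : Tendsto (fun c => Real.log t - μ * Vf c) atTop (nhds 0) := hK.congr' hstar
  have hVlim : Tendsto Vf atTop (nhds (Real.log t / μ)) := by
    have h3 : Tendsto (fun c => (Real.log t - (Real.log t - μ * Vf c)) / μ)
        atTop (nhds ((Real.log t - 0) / μ)) := (tendsto_const_nhds.sub h1).div_const μ
    rw [sub_zero] at h3
    apply h3.congr
    intro c
    field_simp
    ring
  have hfinal : Tendsto (fun c => Real.exp (-Vf c)) atTop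
      (nhds (Real.exp (-(Real.log t / μ)))) :=
    Real.continuous_exp.continuousAt.tendsto.comp hVlim.neg
  have hratio : ∀ᶠ c in atTop, Real.exp (-Vf c) = δ (t * c) / δ c := by
    filter_upwards [eventually_gt_atTop (0:ℝ), htc.eventually (eventually_gt_atTop (0:ℝ))]
      with c hc htc'
    have hdc := hδpos c hc
    have hdtc := hδpos _ htc'
    have : -Vf c = Real.log (δ (t * c)) - Real.log (δ c) := by
      simp only [hVf, hYf, hXf]; ring
    rw [this, Real.exp_sub, Real.exp_log hdtc, Real.exp_log hdc]
  have hgoal : t ^ (1 / (lam - 1)) = Real.exp (-(Real.log t / μ)) := by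
    rw [Real.rpow_def_of_pos ht]
    have h5 : lam - 1 = -μ := by rw [hμdef]; ring
    rw [h5, one_div, inv_neg, ← one_div, mul_neg, mul_one_div]
  rw [hgoal]
  exact hfinal.congr' hratio
end

section
/- Let X be a centered Gaussian process with stationary increments and continuous sample paths whose variance function σ² satisfies: X(t)/t → 0 a.s. as t → −∞. Then for each c > 0 and t ∈ ℝ, Q(t) := sup_{−∞ < s ≤ t}(X(t) − X(s) − c(t−s)) is almost surely finite, and the process {Q(t) : t ≥ 0} is strictly stationary. -/
open MeasureTheory ProbabilityTheory Filter Set Real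


lemma meas_csSup {α : Type*} [MeasurableSpace α] {ι : Type*} [Countable ι] [Nonempty ι]
    (g : ι → α → ℝ) (hg : ∀ i, Measurable (g i)) :
    Measurable fun x => sSup (Set.range fun i => g i x) := by
  apply measurable_of_Iio
  intro a
  have hset : (fun x => sSup (Set.range fun i => g i x)) ⁻¹' Set.Iio a =
      {x | ∃ q : ℚ, (q : ℝ) < a ∧ ∀ i, g i x ≤ (q : ℝ)} ∪
      ({x | ∀ q : ℚ, ∃ i, (q : ℝ) < g i x} ∩ {_x : α | (0:ℝ) < a}) := by
    ext x
    simp only [Set.mem_preimage, Set.mem_Iio, Set.mem_union, Set.mem_inter_iff, Set.mem_setOf_eq]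
    constructor
    · intro hlt
      by_cases hb : BddAbove (Set.range fun i => g i x)
      · obtain ⟨q, hq1, hq2⟩ := exists_rat_btwn hlt
        exact Or.inl ⟨q, hq2, fun i => (le_csSup hb (Set.mem_range_self i)).trans hq1.le⟩
      · refine Or.inr ⟨fun q => ?_, ?_⟩
        · by_contra hcon; push_neg at hcon
          exact hb ⟨q, by rintro y ⟨i, rfl⟩; exact hcon i⟩
        · simpa [Real.sSup_of_not_bddAbove hb] using hlt
    · rintro (⟨q, hqa, hq⟩ | ⟨hub, h0a⟩)
      · have h1 : sSup (Set.range fun i => g i x) ≤ (q : ℝ) :=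
          csSup_le (Set.range_nonempty _) (by rintro y ⟨i, rfl⟩; exact hq i)
        linarith
      · have hb : ¬ BddAbove (Set.range fun i => g i x) := by
          rintro ⟨M, hM⟩
          obtain ⟨q, hq⟩ := exists_rat_gt M
          obtain ⟨i, hi⟩ := hub q
          have := hM (Set.mem_range_self i)
          linarith
        rw [Real.sSup_of_not_bddAbove hb]; exact h0a
  rw [hset]
  apply MeasurableSet.union
  · rw [Set.setOf_exists]
    refine MeasurableSet.iUnion fun q => ?_
    rw [Set.setOf_and]
    refine (MeasurableSet.const _).inter ?_
    rw [Set.setOf_forall]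
    exact MeasurableSet.iInter fun i => measurableSet_le (hg i) measurable_const
  · refine MeasurableSet.inter ?_ (MeasurableSet.const _)
    rw [Set.setOf_forall]
    refine MeasurableSet.iInter fun q => ?_
    rw [Set.setOf_exists]
    exact MeasurableSet.iUnion fun i => measurableSet_lt measurable_const (hg i)

lemma sSup_eq_of_subset_closure {A B : Set ℝ} (hBA : B ⊆ A) (hAc : A ⊆ closure B)
    (hB : B.Nonempty) : sSup A = sSup B := by
  by_cases hb : BddAbove B
  · have hAb : BddAbove A := (bddAbove_closure.mpr hb).mono hAc
    apply le_antisymm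
    · refine csSup_le (hB.mono hBA) fun x hx => ?_
      have hcl : closure B ⊆ Set.Iic (sSup B) :=
        closure_minimal (fun y hy => le_csSup hb hy) isClosed_Iic
      exact hcl (hAc hx)
    · exact csSup_le_csSup hAb hB hBA
  · have hA : ¬ BddAbove A := fun h => hb (h.mono hBA)
    rw [Real.sSup_of_not_bddAbove hA, Real.sSup_of_not_bddAbove hb]

/-- countable dense subset of `Iic t` used to compute the supremum -/
def Dset (t : ℝ) : Set ℝ := insert t ((fun q : ℚ => (q : ℝ)) '' {q : ℚ | (q : ℝ) ≤ t})

lemma Dset_subset (t : ℝ) : Dset t ⊆ Set.Iic t := by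
  intro x hx
  simp only [Dset, Set.mem_insert_iff, Set.mem_image, Set.mem_setOf_eq] at hx
  rcases hx with rfl | ⟨q, hq, rfl⟩
  · exact le_refl x
  · exact hq

lemma Dset_mem (t : ℝ) : t ∈ Dset t := by
  simp [Dset]

lemma Iic_subset_closure_Dset (t : ℝ) : Set.Iic t ⊆ closure (Dset t) := by
  intro s hs
  rw [Metric.mem_closure_iff]
  intro ε hε
  obtain ⟨q, hq1, hq2⟩ := exists_rat_btwn (show s - ε < s by linarith)
  refine ⟨(q : ℝ), ?_, ?_⟩
  · simp only [Dset, Set.mem_insert_iff, Set.mem_image, Set.mem_setOf_eq]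
    exact Or.inr ⟨q, le_trans hq2.le hs, rfl⟩
  rw [Real.dist_eq, abs_of_pos (by linarith)]
  linarith

lemma Dset_countable (t : ℝ) : (Dset t).Countable :=
  Set.Countable.insert t ((Set.to_countable _).image _)

/-- countable-sup version of the buffer functional on path space -/
noncomputable def Fq (c : ℝ) (f : ℝ → ℝ) (t : ℝ) : ℝ :=
  sSup ((fun s => f t - f s - c * (t - s)) '' Dset t)

lemma sSup_Iic_eq_Fq {c : ℝ} {f : ℝ → ℝ} (hf : Continuous f) (t : ℝ) :
    sSup ((fun s => f t - f s - c * (t - s)) '' Set.Iic t) = Fq c f t := by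
  set g : ℝ → ℝ := fun s => f t - f s - c * (t - s) with hg
  have hgc : Continuous g := by
    exact (continuous_const.sub hf).sub (continuous_const.mul (continuous_const.sub continuous_id))
  apply sSup_eq_of_subset_closure (Set.image_mono (Dset_subset t))
  · intro y hy
    obtain ⟨s, hs, rfl⟩ := hy
    have : s ∈ closure (Dset t) := Iic_subset_closure_Dset t hs
    exact (hgc.continuousOn : ContinuousOn g (closure (Dset t))).image_closure ⟨s, this, rfl⟩
  · exact ⟨g t, Set.mem_image_of_mem _ (Dset_mem t)⟩

lemma Fq_measurable (c : ℝ) : Measurable (Fq c) := by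
  apply measurable_pi_lambda
  intro t
  have hc : Countable ↥(Dset t) := (Dset_countable t).to_subtype
  have hne : Nonempty ↥(Dset t) := ⟨⟨t, Dset_mem t⟩⟩
  have himg : ∀ f : ℝ → ℝ, ((fun s => f t - f s - c * (t - s)) '' Dset t) =
      Set.range fun i : ↥(Dset t) => f t - f (i : ℝ) - c * (t - (i : ℝ)) := fun f =>
    Set.image_eq_range _ _
  have heq : (fun f : ℝ → ℝ => Fq c f t) =
      fun f => sSup (Set.range fun i : ↥(Dset t) => f t - f (i : ℝ) - c * (t - (i : ℝ))) :=
    funext fun f => by rw [Fq, himg f]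
  rw [heq]
  exact meas_csSup _ fun i =>
    ((measurable_pi_apply t).sub (measurable_pi_apply (i:ℝ))).sub measurable_const

/-- The stationary buffer content process fed by the process X, drained at rate c. -/
noncomputable def bufferQ {Ω : Type*} (X : ℝ → Ω → ℝ) (c t : ℝ) (ω : Ω) : ℝ :=
  sSup ((fun s => X t ω - X s ω - c * (t - s)) '' Set.Iic t)

/-- For a centered Gaussian process with stationary increments, continuous paths and
X(t)/t → 0 a.s. as t → -∞, the buffer content Q(t) is a.s. finite for each c > 0 and t,
and the process {Q(t) : t ≥ 0} is strictly stationary. -/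
theorem stmt12 {Ω : Type*} [MeasureSpace Ω] [IsProbabilityMeasure (ℙ : Measure Ω)]
    (X : ℝ → Ω → ℝ)
    (hmeas : ∀ t, Measurable (X t))
    (hcont : ∀ ω, Continuous (fun t => X t ω))
    (h0 : ∀ ω, X 0 ω = 0)
    (hcentered : ∀ t, ∫ ω, X t ω = 0)
    (hgauss : ∀ (n : ℕ) (t a : Fin n → ℝ), ∃ v : NNReal,
      Measure.map (fun ω => ∑ i, a i * X (t i) ω) ℙ = gaussianReal 0 v)
    (hstat : ∀ h : ℝ,
      Measure.map (fun ω => fun t : ℝ => X (t + h) ω - X h ω) ℙ =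
        Measure.map (fun ω => fun t : ℝ => X t ω) ℙ)
    (hdrift : ∀ᵐ ω ∂(ℙ : Measure Ω), Tendsto (fun t => X t ω / t) atBot (nhds 0)) :
    ∀ c > (0:ℝ),
      (∀ t : ℝ, ∀ᵐ ω ∂(ℙ : Measure Ω),
        BddAbove ((fun s => X t ω - X s ω - c * (t - s)) '' Set.Iic t)) ∧
      (∀ h ≥ (0:ℝ),
        Measure.map (fun ω => fun t : ℝ => bufferQ X c (t + h) ω) ℙ =
          Measure.map (fun ω => fun t : ℝ => bufferQ X c t ω) ℙ) := by
  intro c hc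
  constructor
  · -- a.s. finiteness (bounded above)
    intro t
    filter_upwards [hdrift] with ω hω
    set g : ℝ → ℝ := fun s => X t ω - X s ω - c * (t - s) with hgdef
    have h2 : Tendsto (fun s : ℝ => X s ω / s - c) atBot (nhds (0 - c)) :=
      hω.sub tendsto_const_nhds
    have h3 : Tendsto (fun s : ℝ => s * (X s ω / s - c)) atBot atTop :=
      Tendsto.atBot_mul_neg (by linarith) tendsto_id h2
    have h4 : Tendsto (fun s : ℝ => X s ω - c * s) atBot atTop := by
      refine Tendsto.congr' ?_ h3
      filter_upwards [eventually_lt_atBot (0:ℝ)] with s hs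
      have hs0 : s ≠ 0 := ne_of_lt hs
      field_simp
    have h5 : Tendsto g atBot atBot := by
      have h6 := tendsto_atBot_add_const_left atBot (X t ω - c * t)
        (tendsto_neg_atTop_atBot.comp h4)
      refine h6.congr fun s => ?_
      simp only [hgdef, Function.comp_apply]
      ring
    obtain ⟨s0, hs0⟩ := eventually_atBot.mp (h5.eventually (eventually_le_atBot (0:ℝ)))
    have hgc : Continuous g :=
      (continuous_const.sub (hcont ω)).sub (continuous_const.mul (continuous_const.sub continuous_id))
    have hne : (Set.Icc (min s0 t) t).Nonempty := ⟨t, ⟨min_le_right _ _, le_refl t⟩⟩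
    obtain ⟨x, hxmem, hx⟩ := isCompact_Icc.exists_isMaxOn hne hgc.continuousOn
    refine ⟨max (g x) 0, ?_⟩
    rintro y ⟨s, hs, rfl⟩
    by_cases hcase : s ≤ s0
    · exact le_trans (hs0 s hcase) (le_max_right _ _)
    · push_neg at hcase
      have hmem : s ∈ Set.Icc (min s0 t) t := ⟨le_trans (min_le_left _ _) hcase.le, hs⟩
      exact le_trans (hx hmem) (le_max_left _ _)
  · -- stationarity
    intro h _hh
    have hF := Fq_measurable c
    have hP1 : Measurable (fun ω => fun u : ℝ => X (u + h) ω - X h ω) :=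
      measurable_pi_lambda _ fun u => (hmeas (u + h)).sub (hmeas h)
    have hP2 : Measurable (fun ω => fun u : ℝ => X u ω) :=
      measurable_pi_lambda _ fun u => hmeas u
    have e1 : (fun ω => fun t : ℝ => bufferQ X c (t + h) ω) =
        (Fq c) ∘ (fun ω => fun u : ℝ => X (u + h) ω - X h ω) := by
      funext ω t
      have hY : Continuous (fun u : ℝ => X (u + h) ω - X h ω) :=
        ((hcont ω).comp (continuous_id.add continuous_const)).sub continuous_const
      have himg : ((fun s => X (t + h) ω - X s ω - c * (t + h - s)) '' Set.Iic (t + h)) =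
          ((fun u => (X (t + h) ω - X h ω) - (X (u + h) ω - X h ω) - c * (t - u)) ''
            Set.Iic t) := by
        rw [← Set.image_add_const_Iic h t, Set.image_image]
        exact Set.image_congr fun u _ => by ring
      show bufferQ X c (t + h) ω = Fq c (fun u : ℝ => X (u + h) ω - X h ω) t
      rw [bufferQ, himg]
      exact sSup_Iic_eq_Fq hY t
    have e2 : (fun ω => fun t : ℝ => bufferQ X c t ω) =
        (Fq c) ∘ (fun ω => fun u : ℝ => X u ω) := by
      funext ω t
      show bufferQ X c t ω = Fq c (fun u : ℝ => X u ω) t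
      rw [bufferQ]
      exact sSup_Iic_eq_Fq (hcont ω) t
    rw [e1, e2, ← Measure.map_map hF hP1, ← Measure.map_map hF hP2, hstat h]
end
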